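/- Let H be a real Hilbert space, let A be a maximally monotone set-valued operator on H, let B : H → H be monotone and single-valued, let λ > 0, and let J denote the resolvent of λA. Let x_0, x_{−1} ∈ H and define x_{k+1} = J(x_k − λB(x_k)) − λ(B(x_k) − B(x_{k−1})) for k ≥ 0, and set y_k = λB(x_k). Then for every x ∈ H with −B(x) ∈ A(x), setting y = λB(x), the following holds for all k ≥ 0: ‖(x_{k+1} + y_k) − (x + y)‖² ≤ ‖(x_k + y_{k−1}) − (x + y)‖² + 4⟪y_k − y_{k−1}, x_k − x_{k+1}⟫ − ‖x_{k+1} − x_k‖² − 3‖y_k − y_{k−1}‖². -/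
import Mathlib


open scoped RealInnerProductSpace

/-- A set-valued operator `A ⊆ H × H` is monotone. -/
def IsMonotoneOp {H : Type*} [NormedAddCommGroup H] [InnerProductSpace ℝ H]
    (A : Set (H × H)) : Prop :=
  ∀ p ∈ A, ∀ q ∈ A, (0 : ℝ) ≤ ⟪p.2 - q.2, p.1 - q.1⟫

/-- Maximal monotonicity. -/
def IsMaximalMonotoneOp {H : Type*} [NormedAddCommGroup H] [InnerProductSpace ℝ H]
    (A : Set (H × H)) : Prop :=
  IsMonotoneOp A ∧
    ∀ p : H × H, (∀ q ∈ A, (0 : ℝ) ≤ ⟪p.2 - q.2, p.1 - q.1⟫) → p ∈ A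

/-- The scaled operator `cA = {(x, c•u) : (x,u) ∈ A}`. -/
def smulOp {H : Type*} [NormedAddCommGroup H] [InnerProductSpace ℝ H]
    (c : ℝ) (A : Set (H × H)) : Set (H × H) :=
  (fun p : H × H => (p.1, c • p.2)) '' A

/-- Inequality (24) of the paper: the one-step estimate for the shadow
Douglas–Rachford iteration, after using monotonicity of `B` to drop the
inner-product term. Here `y_k = λB(x_k)`. -/
theorem statement8
    {H : Type*} [NormedAddCommGroup H] [InnerProductSpace ℝ H] [CompleteSpace H]
    (A : Set (H × H)) (hA : IsMaximalMonotoneOp A)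
    (B : H → H) (hBmono : ∀ u v : H, (0 : ℝ) ≤ ⟪B u - B v, u - v⟫)
    (lam : ℝ) (hlam : 0 < lam)
    (J : H → H) (hJ : ∀ w : H, (J w, w - J w) ∈ smulOp lam A)
    (x : ℤ → H)
    (hrec : ∀ k : ℤ, 0 ≤ k →
      x (k + 1) = J (x k - lam • B (x k)) - lam • (B (x k) - B (x (k - 1))))
    (p : H) (hp : (p, -B p) ∈ A)
    (k : ℤ) (hk : 0 ≤ k) :
    ‖(x (k + 1) + lam • B (x k)) - (p + lam • B p)‖ ^ 2 ≤
      ‖(x k + lam • B (x (k - 1))) - (p + lam • B p)‖ ^ 2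
        + 4 * ⟪lam • B (x k) - lam • B (x (k - 1)), x k - x (k + 1)⟫
        - ‖x (k + 1) - x k‖ ^ 2
        - 3 * ‖lam • B (x k) - lam • B (x (k - 1))‖ ^ 2 := by
  set w := x k - lam • B (x k) with hw
  obtain ⟨q, hqA, hq⟩ := hJ w
  have hq1 : q.1 = J w := congrArg Prod.fst hq
  have hq2 : lam • q.2 = w - J w := congrArg Prod.snd hq
  have hmonoA : (0:ℝ) ≤ ⟪q.2 - (-B p), q.1 - p⟫ := hA.1 q hqA (p, -B p) hp
  have h1 : (0:ℝ) ≤ ⟪(w - J w) + lam • B p, J w - p⟫ := by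
    have h := mul_nonneg hlam.le hmonoA
    rw [← real_inner_smul_left] at h
    rw [smul_sub, hq2, hq1, smul_neg] at h
    simpa [sub_neg_eq_add] using h
  have h2 : (0:ℝ) ≤ lam * ⟪B (x k) - B p, x k - p⟫ :=
    mul_nonneg hlam.le (hBmono _ _)
  have hJw : J w = x (k + 1) + lam • (B (x k) - B (x (k - 1))) := by
    rw [hrec k hk]; abel
  rw [hJw, hw] at h1
  simp only [← real_inner_self_eq_norm_sq]
  simp only [inner_sub_left, inner_sub_right, inner_add_left, inner_add_right,
    real_inner_smul_left, real_inner_smul_right, smul_sub] at h1 h2 ⊢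
  simp only [real_inner_comm] at h1 h2 ⊢
  linarith [h1, h2]
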